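/- Let (E, ℋ) be a Steiner system of type (5,8,24) (the Witt geometry) and let M be its associated matroid of rank 6, whose bases are the 6-element subsets of E contained in no block. Then P_M(t) = 1 + 735t + 4830t². -/

import Mathlib

open Polynomial Matroid

namespace KLPaper

variable {α : Type} [Fintype α]

set_option linter.unusedSectionVars false
set_option linter.unusedVariables false
set_option maxHeartbeats 1000000


/-- The contraction `M ⧸ C` of a set `C` in a matroid `M`, defined (as is standard,
see e.g. Oxley, Prop. 3.1.1) as the dual of the deletion of `C` from the dual matroid,
where deletion of `C` is restriction to `M.E \ C`.  Its ground set is `M.E \ C`. -/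
noncomputable def contract (M : Matroid α) (C : Set α) : Matroid α :=
  (M✶ ↾ (M.E \ C))✶

scoped infixl:75 " ⧸ " => KLPaper.contract

/-- The rank `rk M S` of a set `S` in a matroid `M`: the largest cardinality of an
independent subset of `S`. -/
noncomputable def rk (M : Matroid α) (S : Set α) : ℕ :=
  sSup {n | ∃ I, I ⊆ S ∧ M.Indep I ∧ I.ncard = n}

/-- The rank of a matroid: the rank of its ground set. -/
noncomputable def rank (M : Matroid α) : ℕ := rk M M.E

/-- A circuit of a matroid: a minimal dependent set, i.e. a dependent subset of the
ground set all of whose proper subsets are independent. -/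
def IsCircuit (M : Matroid α) (C : Set α) : Prop :=
  M.Dep C ∧ ∀ D ⊂ C, M.Indep D

/-- A hyperplane of a matroid: a maximal proper flat. -/
def IsHyperplane (M : Matroid α) (H : Set α) : Prop :=
  M.IsFlat H ∧ H ≠ M.E ∧ ∀ F, M.IsFlat F → H ⊂ F → F = M.E

/-- A stressed hyperplane of a matroid `M` of rank `k`: a hyperplane `H` such that every
`k`-element subset of `H` is a circuit of `M`. -/
def Stressed (M : Matroid α) (H : Set α) : Prop :=
  IsHyperplane M H ∧ ∀ C ⊆ H, C.ncard = rank M → IsCircuit M C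

/-- `Mt` is the relaxation of `M` at the stressed hyperplane `H`: the matroid on the same
ground set whose bases are exactly the bases of `M` together with all `(rank M)`-element
subsets of `H`. -/
def IsRelaxation (M Mt : Matroid α) (H : Set α) : Prop :=
  Mt.E = M.E ∧ ∀ B : Set α, Mt.IsBase B ↔ (M.IsBase B ∨ (B ⊆ H ∧ B.ncard = rank M))

/-- The characterization of the Kazhdan–Lusztig polynomials `P_M` and the `Z`-polynomials
`Z_M` of matroids (on a fixed finite type): (i) both equal `1` on matroids with empty
ground set; (ii) `2 · deg P_M < rk M` when the ground set is nonempty (the zero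
polynomial being allowed); (iii) `Z_M` is palindromic of degree `rk M`;
(iv) `Z_M = Σ_{S ⊆ E} t^{rk S} · P_{M ⧸ S}`, the sum over all subsets `S` of `E`. -/
def PZaxioms (P Z : Matroid α → Polynomial ℤ) : Prop :=
  (∀ M : Matroid α, M.E = ∅ → P M = 1 ∧ Z M = 1) ∧
  (∀ M : Matroid α, M.E ≠ ∅ → (P M = 0 ∨ 2 * (P M).natDegree < rank M)) ∧
  (∀ M : Matroid α, (Z M).natDegree ≤ rank M ∧
      ∀ i ≤ rank M, (Z M).coeff i = (Z M).coeff (rank M - i)) ∧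
  (∀ M : Matroid α,
      Z M = ∑ S ∈ M.E.toFinite.toFinset.powerset,
        X ^ (rk M (S : Set α)) * P (M ⧸ (S : Set α)))

-- ===== foundation =====

@[simp] lemma contract_ground (M : Matroid α) (C : Set α) : (M ⧸ C).E = M.E \ C := rfl

lemma contract_empty (M : Matroid α) : (M ⧸ (∅ : Set α)) = M := by
  unfold contract
  rw [Set.diff_empty, show M.E = M✶.E from rfl, Matroid.restrict_ground_eq_self,
    Matroid.dual_dual]

lemma rk_bddAbove (M : Matroid α) (S : Set α) :
    BddAbove {n | ∃ I, I ⊆ S ∧ M.Indep I ∧ I.ncard = n} := by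
  refine ⟨Fintype.card α, fun n hn => ?_⟩
  obtain ⟨I, -, -, rfl⟩ := hn
  simpa [Set.ncard_univ] using Set.ncard_le_ncard (Set.subset_univ I) (Set.toFinite _)

lemma le_rk {M : Matroid α} {S I : Set α} (hIS : I ⊆ S) (hI : M.Indep I) :
    I.ncard ≤ rk M S :=
  le_csSup (rk_bddAbove M S) ⟨I, hIS, hI, rfl⟩

lemma rk_le {M : Matroid α} {S : Set α} {n : ℕ}
    (h : ∀ I, I ⊆ S → M.Indep I → I.ncard ≤ n) : rk M S ≤ n :=
  csSup_le ⟨0, ∅, by simp⟩ (by rintro m ⟨I, hIS, hI, rfl⟩; exact h I hIS hI)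

lemma rk_empty (M : Matroid α) : rk M (∅ : Set α) = 0 :=
  Nat.le_zero.mp (rk_le fun I hI _ => by simp [Set.subset_empty_iff.mp hI])

lemma indep_rk_eq {M : Matroid α} {S : Set α} (hS : M.Indep S) : rk M S = S.ncard :=
  le_antisymm (rk_le fun I hIS _ => Set.ncard_le_ncard hIS (Set.toFinite _))
    (le_rk subset_rfl hS)

lemma indep_ncard_le_of_base {M : Matroid α} {I B : Set α} (hI : M.Indep I) (hB : M.IsBase B) :
    I.ncard ≤ B.ncard := by
  obtain ⟨B', hB', hIB'⟩ := hI.exists_isBase_superset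
  exact (Set.ncard_le_ncard hIB' (Set.toFinite _)).trans (hB'.ncard_eq_ncard_of_isBase hB).le

lemma rank_eq_of_base {M : Matroid α} {B : Set α} (hB : M.IsBase B) : rank M = B.ncard :=
  le_antisymm (rk_le fun I _ hI => indep_ncard_le_of_base hI hB)
    (le_rk hB.subset_ground hB.indep)

lemma indep_ncard_le_rank {M : Matroid α} {I : Set α} (hI : M.Indep I) :
    I.ncard ≤ rank M := le_rk hI.subset_ground hI

lemma contract_base_iff {M : Matroid α} {C : Set α} (hC : C ⊆ M.E) {B : Set α} :
    (M ⧸ C).IsBase B ↔ B ⊆ M.E \ C ∧ ∃ I, M.IsBasis I C ∧ M.IsBase (B ∪ I) := by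
  rw [contract, Matroid.dual_isBase_iff']
  rw [show (M✶ ↾ (M.E \ C)).E = M.E \ C from rfl]
  have hground : M.E \ C ⊆ M✶.E := Set.diff_subset
  rw [Matroid.isBase_restrict_iff hground]
  constructor
  · rintro ⟨h1, hB⟩
    refine ⟨hB, ?_⟩
    obtain ⟨Bd, hBd, hD⟩ := h1.exists_isBase
    have h2 := hBd.compl_inter_isBasis_of_inter_isBasis (X := M.E \ C) (by rwa [← hD])
    rw [Matroid.dual_dual, Matroid.dual_ground, Set.diff_diff_cancel_left hC] at h2
    refine ⟨(M.E \ Bd) ∩ C, h2, ?_⟩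
    have hBM : M.IsBase (M.E \ Bd) := hBd.compl_isBase_of_dual
    have hBdE : Bd ⊆ M.E := hBd.subset_ground
    have : B ∪ (M.E \ Bd) ∩ C = M.E \ Bd := by
      apply Set.eq_of_subset_of_subset
      · rintro x (hx | hx)
        · have hx1 := hB hx
          have : x ∉ Bd := fun hxB => by
            have : x ∈ Bd ∩ (M.E \ C) := ⟨hxB, hx1⟩
            rw [← hD] at this
            exact this.2 hx
          exact ⟨hx1.1, this⟩
        · exact hx.1
      · rintro x ⟨hxE, hxBd⟩
        by_cases hxC : x ∈ C
        · exact Or.inr ⟨⟨hxE, hxBd⟩, hxC⟩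
        · left
          by_contra hxB
          have : x ∈ Bd ∩ (M.E \ C) := by
            rw [← hD]; exact ⟨⟨hxE, hxC⟩, hxB⟩
          exact hxBd this.1
    rwa [this]
  · rintro ⟨hB, I, hI, hBI⟩
    refine ⟨?_, hB⟩
    have hIC : I ⊆ C := hI.subset
    have hbas : M.IsBasis ((B ∪ I) ∩ C) C := by
      have h1 : (B ∪ I) ∩ C = I := by
        apply Set.eq_of_subset_of_subset
        · rintro x ⟨hx | hx, hxC⟩
          · exact absurd hxC (hB hx).2
          · exact hx
        · exact fun x hx => ⟨Or.inr hx, hIC hx⟩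
      rwa [h1]
    have key := (hBI.inter_isBasis_iff_compl_inter_isBasis_dual hC).mp hbas
    have h2 : (M.E \ (B ∪ I)) ∩ (M.E \ C) = (M.E \ C) \ B := by
      ext x
      simp only [Set.mem_inter_iff, Set.mem_diff, Set.mem_union]
      constructor
      · rintro ⟨⟨hxE, hx⟩, -, hxC⟩
        exact ⟨⟨hxE, hxC⟩, fun h => hx (Or.inl h)⟩
      · rintro ⟨⟨hxE, hxC⟩, hxB⟩
        exact ⟨⟨hxE, fun h => h.elim hxB (fun hI' => hxC (hIC hI'))⟩, hxE, hxC⟩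
    rwa [h2] at key



section Axioms

variable {P Z : Matroid α → Polynomial ℤ} (hPZ : PZaxioms P Z)

include hPZ

lemma P_empty {M : Matroid α} (h : M.E = ∅) : P M = 1 := (hPZ.1 M h).1

lemma P_rank0 {M : Matroid α} (h : M.E ≠ ∅) (hr : rank M = 0) : P M = 0 := by
  rcases hPZ.2.1 M h with h0 | h2
  · exact h0
  · omega

lemma P_coeff_zero_of_2le {M : Matroid α} (h : M.E ≠ ∅) {j : ℕ} (hj : rank M ≤ 2 * j) :
    (P M).coeff j = 0 := by
  rcases hPZ.2.1 M h with h0 | h2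
  · simp [h0]
  · apply Polynomial.coeff_eq_zero_of_natDegree_lt
    omega

end Axioms

-- spanning contraction has rank zero
lemma contract_spanning_rank0 {M : Matroid α} {C B₀ : Set α} (hC : C ⊆ M.E)
    (hB₀ : M.IsBase B₀) (hB₀C : B₀ ⊆ C) : rank (M ⧸ C) = 0 := by
  have : ∀ I, I ⊆ (M ⧸ C).E → (M ⧸ C).Indep I → I.ncard ≤ 0 := by
    intro I _ hI
    obtain ⟨B, hB, hIB⟩ := hI.exists_isBase_superset
    rw [contract_base_iff hC] at hB
    obtain ⟨hBE, J, hJ, hBJ⟩ := hB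
    have hJbase : M.IsBase J := by
      by_contra hnot
      obtain ⟨e, he, hins⟩ := hJ.indep.exists_insert_of_not_isBase hnot hB₀
      exact he.2 (hJ.mem_of_insert_indep (hB₀C he.1) hins)
    have : J = B ∪ J := hJbase.eq_of_subset_isBase hBJ Set.subset_union_right
    have hBJ2 : B ⊆ J := by rw [this]; exact Set.subset_union_left
    have hBsub : B ⊆ C := hBJ2.trans hJ.subset
    have hBempty : B = ∅ := by
      ext x
      simp only [Set.mem_empty_iff_false, iff_false]
      intro hx
      exact (hBE hx).2 (hBsub hx)
    simp [Set.subset_empty_iff.mp (hBempty ▸ hIB)]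
  exact Nat.le_zero.mp (rk_le fun I hIS hI => this I hIS hI)

-- ===== rank-1 matroids =====

def loopSet (N : Matroid α) : Set α := {x ∈ N.E | ¬ N.Indep {x}}

lemma loopSet_subset (N : Matroid α) : loopSet N ⊆ N.E := fun _ h => h.1

lemma base_rank1_iff {N : Matroid α} (hr : rank N = 1) {B : Set α} :
    N.IsBase B ↔ ∃ x, B = {x} ∧ N.Indep {x} := by
  constructor
  · intro hB
    have h1 : B.ncard = 1 := by rw [← rank_eq_of_base hB, hr]
    obtain ⟨x, rfl⟩ := Set.ncard_eq_one.mp h1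
    exact ⟨x, rfl, hB.indep⟩
  · rintro ⟨x, rfl, hx⟩
    obtain ⟨B', hB', hxB'⟩ := hx.exists_isBase_superset
    have h1 : B'.ncard = 1 := by rw [← rank_eq_of_base hB', hr]
    have : {x} = B' := Set.eq_of_subset_of_ncard_le hxB' (by simp [h1]) (Set.toFinite _)
    rwa [this]

lemma indep_singleton_rank1 {N : Matroid α} (hr : rank N = 1) {x : α}
    (hx : x ∈ N.E) (hxL : x ∉ loopSet N) : N.Indep {x} := by
  by_contra h
  exact hxL ⟨hx, h⟩

lemma basis_of_loops_eq_empty {N : Matroid α} {S I : Set α} (hS : S ⊆ loopSet N)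
    (hI : N.IsBasis I S) : I = ∅ := by
  ext x
  simp only [Set.mem_empty_iff_false, iff_false]
  intro hx
  exact (hS (hI.subset hx)).2 (hI.indep.subset (Set.singleton_subset_iff.mpr hx))

lemma contract_loops_base_iff {N : Matroid α} (hr : rank N = 1) {S : Set α}
    (hS : S ⊆ loopSet N) {B : Set α} : (N ⧸ S).IsBase B ↔ N.IsBase B := by
  rw [contract_base_iff ((hS.trans (loopSet_subset N)))]
  constructor
  · rintro ⟨hBE, I, hI, hBI⟩
    rwa [basis_of_loops_eq_empty hS hI, Set.union_empty] at hBI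
  · intro hB
    obtain ⟨x, rfl, hx⟩ := (base_rank1_iff hr).mp hB
    refine ⟨?_, ?_⟩
    · rintro y (rfl : y = x)
      exact ⟨hx.subset_ground rfl, fun hyS => (hS hyS).2 hx⟩
    · obtain ⟨I, hI⟩ := N.exists_isBasis S (hS.trans (loopSet_subset N))
      exact ⟨I, hI, by rwa [basis_of_loops_eq_empty hS hI, Set.union_empty]⟩

lemma contract_loops_rank1 {N : Matroid α} (hr : rank N = 1) {S : Set α}
    (hS : S ⊆ loopSet N) : rank (N ⧸ S) = 1 := by
  obtain ⟨B, hB⟩ := N.exists_isBase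
  have hB' : (N ⧸ S).IsBase B := (contract_loops_base_iff hr hS).mpr hB
  rw [rank_eq_of_base hB', ← rank_eq_of_base hB, hr]

lemma contract_loops_loopSet {N : Matroid α} (hr : rank N = 1) {S : Set α}
    (hS : S ⊆ loopSet N) : loopSet (N ⧸ S) = loopSet N \ S := by
  have hNE := hS.trans (loopSet_subset N)
  have hindep : ∀ x, (N ⧸ S).Indep {x} ↔ N.Indep {x} := by
    intro x
    rw [Matroid.indep_iff, Matroid.indep_iff]
    constructor
    · rintro ⟨B, hB, hxB⟩
      exact ⟨B, (contract_loops_base_iff hr hS).mp hB, hxB⟩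
    · rintro ⟨B, hB, hxB⟩
      exact ⟨B, (contract_loops_base_iff hr hS).mpr hB, hxB⟩
  ext x
  simp only [loopSet, Set.mem_setOf_eq, contract_ground, Set.mem_diff, hindep]
  constructor
  · rintro ⟨⟨hxE, hxS⟩, hni⟩
    exact ⟨⟨hxE, hni⟩, hxS⟩
  · rintro ⟨⟨hxE, hni⟩, hxS⟩
    exact ⟨⟨hxE, hxS⟩, hni⟩

lemma rk_of_subset_loops {N : Matroid α} {S : Set α} (hS : S ⊆ loopSet N) :
    rk N S = 0 := by
  refine Nat.le_zero.mp (rk_le fun I hIS hI => ?_)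
  have : I = ∅ := by
    ext x
    simp only [Set.mem_empty_iff_false, iff_false]
    intro hx
    exact (hS (hIS hx)).2 (hI.subset (Set.singleton_subset_iff.mpr hx))
  simp [this]

lemma contract_nonloop_rank0 {N : Matroid α} (hr : rank N = 1) {S : Set α}
    (hS : S ⊆ N.E) {x : α} (hxS : x ∈ S) (hxL : x ∉ loopSet N) :
    rank (N ⧸ S) = 0 := by
  have hx : N.Indep {x} := indep_singleton_rank1 hr (hS hxS) hxL
  have hbase : N.IsBase {x} := (base_rank1_iff hr).mpr ⟨x, rfl, hx⟩
  exact contract_spanning_rank0 hS hbase (Set.singleton_subset_iff.mpr hxS)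

section Rank1P

variable {P Z : Matroid α → Polynomial ℤ} (hPZ : PZaxioms P Z)
include hPZ

lemma P_eq_C_of_rank1 {M : Matroid α} (hE : M.E ≠ ∅) (hr : rank M = 1) :
    P M = Polynomial.C ((P M).coeff 0) := by
  rcases hPZ.2.1 M hE with h0 | h2
  · simp [h0]
  · exact Polynomial.eq_C_of_natDegree_le_zero (by omega)

lemma P_rank1_loops :
    ∀ m : ℕ, ∀ N : Matroid α, rank N = 1 → (loopSet N).ncard = m →
      P N = if m = 0 then 1 else 0 := by
  intro m
  induction m using Nat.strong_induction_on with
  | _ m IH =>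
  intro N hr hm
  classical
  set F := N.E.toFinite.toFinset with hF
  have hFcoe : (F : Set α) = N.E := Set.Finite.coe_toFinset _
  set LF := (loopSet N).toFinite.toFinset with hLFdef
  have hLFcoe : (LF : Set α) = loopSet N := Set.Finite.coe_toFinset _
  have hLFsub : LF ⊆ F := by
    intro x hx
    rw [Set.Finite.mem_toFinset] at hx ⊢
    exact loopSet_subset N hx
  have hLFcard : LF.card = m := by
    rw [← hm, ← hLFcoe, Set.ncard_coe_finset]
  obtain ⟨B₀, hB₀⟩ := N.exists_isBase
  obtain ⟨x₀, hBeq, hx₀⟩ := (base_rank1_iff hr).mp hB₀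
  have hx₀E : x₀ ∈ N.E := hx₀.subset_ground rfl
  have hx₀L : x₀ ∉ loopSet N := fun h => h.2 hx₀
  have hEne : N.E ≠ ∅ := fun h => by rw [h] at hx₀E; exact hx₀E
  have hZ := hPZ.2.2.2 N
  -- evaluate the sum
  have hsplit : (∑ S ∈ F.powerset, X ^ (rk N (S : Set α)) * P (N ⧸ (S : Set α)))
      = (∑ S ∈ LF.powerset, P (N ⧸ (S : Set α))) + X := by
    rw [← Finset.sum_filter_add_sum_filter_not F.powerset (· ⊆ LF)]
    congr 1
    · have hfe : F.powerset.filter (· ⊆ LF) = LF.powerset := by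
        ext S
        simp only [Finset.mem_filter, Finset.mem_powerset]
        exact ⟨fun h => h.2, fun h => ⟨h.trans hLFsub, h⟩⟩
      rw [hfe]
      apply Finset.sum_congr rfl
      intro S hS
      have hSL : (S : Set α) ⊆ loopSet N := by
        rw [← hLFcoe]
        exact_mod_cast Finset.mem_powerset.mp hS
      rw [rk_of_subset_loops hSL, pow_zero, one_mul]
    · have hFmem : F ∈ F.powerset.filter (fun S => ¬ S ⊆ LF) := by
        simp only [Finset.mem_filter, Finset.mem_powerset]
        refine ⟨subset_rfl, fun h => hx₀L ?_⟩
        rw [← hLFcoe]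
        exact_mod_cast h (by rw [Set.Finite.mem_toFinset]; exact hx₀E)
      have hFval : X ^ (rk N (F : Set α)) * P (N ⧸ (F : Set α)) = X := by
        rw [hFcoe]
        have h1 : rk N N.E = 1 := hr
        have h2 : P (N ⧸ N.E) = 1 := P_empty hPZ (by simp [contract_ground])
        rw [h1, h2, pow_one, mul_one]
      refine (Finset.sum_eq_single_of_mem F hFmem ?_).trans hFval
      intro S hS hSne
      rw [Finset.mem_filter, Finset.mem_powerset] at hS
      obtain ⟨hSF, hSnL⟩ := hS
      obtain ⟨y, hyS, hyL⟩ := Finset.not_subset.mp hSnL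
      have hSE : (S : Set α) ⊆ N.E := by rw [← hFcoe]; exact_mod_cast hSF
      have hyL' : y ∉ loopSet N := fun h => hyL (by rw [hLFdef, Set.Finite.mem_toFinset]; exact h)
      have hr0 : rank (N ⧸ (S : Set α)) = 0 :=
        contract_nonloop_rank0 hr hSE (by exact_mod_cast hyS) hyL'
      have hgne : (N ⧸ (S : Set α)).E ≠ ∅ := by
        rw [contract_ground]
        intro h
        apply hSne
        apply Finset.Subset.antisymm hSF
        intro z hz
        rw [Set.Finite.mem_toFinset] at hz
        by_contra hzS
        have : z ∈ N.E \ (S : Set α) := ⟨hz, by exact_mod_cast hzS⟩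
        rw [h] at this
        exact this
      rw [P_rank0 hPZ hgne hr0, mul_zero]
  rw [hsplit] at hZ
  -- coefficient facts
  have hrank1 : rank N = 1 := hr
  have hpal := (hPZ.2.2.1 N).2 0 (by omega)
  rw [hrank1] at hpal
  have hcontr_facts : ∀ S ∈ LF.powerset, rank (N ⧸ (S : Set α)) = 1 ∧
      (N ⧸ (S : Set α)).E ≠ ∅ ∧ loopSet (N ⧸ (S : Set α)) = loopSet N \ (S : Set α) := by
    intro S hS
    have hSL : (S : Set α) ⊆ loopSet N := by
      rw [← hLFcoe]
      exact_mod_cast Finset.mem_powerset.mp hS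
    refine ⟨contract_loops_rank1 hr hSL, ?_, contract_loops_loopSet hr hSL⟩
    rw [contract_ground]
    intro h
    have : x₀ ∈ N.E \ (S : Set α) := ⟨hx₀E, fun hc => hx₀L (hSL hc)⟩
    rw [h] at this
    exact this
  have hc1 : (Z N).coeff 1 = 1 := by
    rw [hZ, Polynomial.coeff_add, Polynomial.coeff_X_one, Polynomial.finset_sum_coeff]
    have : ∀ S ∈ LF.powerset, (P (N ⧸ (S : Set α))).coeff 1 = 0 := by
      intro S hS
      obtain ⟨h1, h2, _⟩ := hcontr_facts S hS
      exact P_coeff_zero_of_2le hPZ h2 (by omega)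
    rw [Finset.sum_congr rfl this]
    simp
  have hc0 : (∑ S ∈ LF.powerset, (P (N ⧸ (S : Set α))).coeff 0) = 1 := by
    have : (Z N).coeff 0 = ∑ S ∈ LF.powerset, (P (N ⧸ (S : Set α))).coeff 0 := by
      rw [hZ, Polynomial.coeff_add, Polynomial.coeff_X_zero, Polynomial.finset_sum_coeff,
        add_zero]
    rw [← this, hpal]
    simpa using hc1
  have hPconst : P N = Polynomial.C ((P N).coeff 0) := P_eq_C_of_rank1 hPZ hEne hr
  by_cases hm0 : m = 0
  · subst hm0
    have hLFe : LF = ∅ := Finset.card_eq_zero.mp hLFcard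
    rw [hLFe] at hc0
    simp only [Finset.powerset_empty, Finset.sum_singleton, Finset.coe_empty] at hc0
    rw [contract_empty] at hc0
    rw [hPconst, hc0]
    simp
  · -- m ≥ 1
    have hterm : ∀ S ∈ LF.powerset, (P (N ⧸ (S : Set α))).coeff 0 =
        (if S = ∅ then (P N).coeff 0 else 0) + (if S = LF then 1 else 0) := by
      intro S hS
      have hSsub := Finset.mem_powerset.mp hS
      have hSL : (S : Set α) ⊆ loopSet N := by
        rw [← hLFcoe]; exact_mod_cast hSsub
      by_cases hSe : S = ∅
      · subst hSe
        have hne : (∅ : Finset α) ≠ LF := fun h => hm0 (by rw [← hLFcard, ← h]; simp)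
        rw [Finset.coe_empty, contract_empty]
        simp [hne]
      · obtain ⟨h1, h2, h3⟩ := hcontr_facts S hS
        have hScard : (S : Set α).ncard = S.card := Set.ncard_coe_finset S
        have hLoopCard : (loopSet (N ⧸ (S : Set α))).ncard = m - S.card := by
          rw [h3, Set.ncard_diff hSL (Set.toFinite _), hm, hScard]
        have hSpos : 1 ≤ S.card := Finset.card_pos.mpr (Finset.nonempty_of_ne_empty hSe)
        have hSle : S.card ≤ m := by
          rw [← hLFcard]; exact Finset.card_le_card hSsub
        have hlt : m - S.card < m := by omega
        have hIH := IH (m - S.card) hlt (N ⧸ (S : Set α)) h1 hLoopCard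
        have hiff : m - S.card = 0 ↔ S = LF := by
          constructor
          · intro h
            exact Finset.eq_of_subset_of_card_le hSsub (by omega)
          · intro h
            subst h
            omega
        by_cases hSLF : S = LF
        · rw [hIH, if_pos (hiff.mpr hSLF), if_neg hSe, if_pos hSLF]
          simp
        · rw [hIH, if_neg (fun h => hSLF (hiff.mp h)), if_neg hSe, if_neg hSLF]
          simp
    rw [Finset.sum_congr rfl hterm, Finset.sum_add_distrib] at hc0
    rw [Finset.sum_ite_eq' LF.powerset (∅ : Finset α) (fun _ => (P N).coeff 0),
      Finset.sum_ite_eq' LF.powerset LF (fun _ => (1 : ℤ))] at hc0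
    simp only [Finset.empty_mem_powerset, Finset.mem_powerset_self, if_pos] at hc0
    have : (P N).coeff 0 = 0 := by omega
    rw [hPconst, this]
    simp [hm0]

end Rank1P

-- ===== Steiner systems =====

structure SteinerHyp (d : ℕ) (E : Set α) (Blocks : Set (Set α)) (M : Matroid α) : Prop where
  hd : 1 ≤ d
  hE : E.ncard = 19 + d
  hB : ∀ Bl ∈ Blocks, Bl ⊆ E ∧ Bl.ncard = d + 3
  hS : ∀ D ⊆ E, D.ncard = d → ∃! Bl, Bl ∈ Blocks ∧ D ⊆ Bl
  hME : M.E = E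
  hMB : ∀ B : Set α, M.IsBase B ↔ B ⊆ E ∧ B.ncard = d + 1 ∧ ∀ Bl ∈ Blocks, ¬B ⊆ Bl

namespace SteinerHyp

variable {d : ℕ} {E : Set α} {Blocks : Set (Set α)} {M : Matroid α}
  (h : SteinerHyp d E Blocks M)
include h

lemma block_ssub_ground {Bl : Set α} (hBl : Bl ∈ Blocks) : ∃ x ∈ E, x ∉ Bl := by
  by_contra hc
  push_neg at hc
  have h1 : E = Bl := Set.Subset.antisymm hc (h.hB Bl hBl).1
  have h2 := h.hE
  rw [h1, (h.hB Bl hBl).2] at h2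
  omega

lemma exists_base_superset_small {I : Set α} (hIE : I ⊆ E) (hI : I.ncard ≤ d) :
    ∃ B, M.IsBase B ∧ I ⊆ B := by
  obtain ⟨D, hID, hDE, hD⟩ := Set.exists_subsuperset_card_eq hIE hI (by rw [h.hE]; omega)
  obtain ⟨Bl, ⟨hBl, hDBl⟩, huniq⟩ := h.hS D hDE hD
  obtain ⟨x, hxE, hxBl⟩ := h.block_ssub_ground hBl
  refine ⟨insert x D, ?_, hID.trans (Set.subset_insert x D)⟩
  rw [h.hMB]
  refine ⟨Set.insert_subset hxE hDE, ?_, ?_⟩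
  · rw [Set.ncard_insert_of_notMem (fun hxD => hxBl (hDBl hxD)) (Set.toFinite _), hD]
  · intro Bl' hBl' hsub
    have hDBl' : D ⊆ Bl' := (Set.subset_insert x D).trans hsub
    have : Bl' = Bl := huniq Bl' ⟨hBl', hDBl'⟩
    exact hxBl (this ▸ hsub (Set.mem_insert x D))

lemma indep_small {I : Set α} (hIE : I ⊆ E) (hI : I.ncard ≤ d) : M.Indep I := by
  obtain ⟨B, hB, hIB⟩ := h.exists_base_superset_small hIE hI
  exact Matroid.indep_iff.mpr ⟨B, hB, hIB⟩

lemma base_card {B : Set α} (hB : M.IsBase B) : B.ncard = d + 1 := ((h.hMB B).mp hB).2.1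

lemma rank_M : rank M = d + 1 := by
  obtain ⟨B, hB, -⟩ := h.exists_base_superset_small (Set.empty_subset E) (by simp)
  rw [rank_eq_of_base hB, h.base_card hB]

lemma indep_le {I : Set α} (hI : M.Indep I) : I.ncard ≤ d + 1 := by
  have := indep_ncard_le_rank hI
  rwa [h.rank_M] at this

lemma indep_base_of_card {I : Set α} (hI : M.Indep I) (hc : I.ncard = d + 1) : M.IsBase I := by
  obtain ⟨B, hB, hIB⟩ := hI.exists_isBase_superset
  have : I = B := Set.eq_of_subset_of_ncard_le hIB
    (by rw [h.base_card hB, hc]) (Set.toFinite _)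
  rwa [this]

lemma indep_in_block_le {I Bl : Set α} (hBl : Bl ∈ Blocks) (hI : M.Indep I) (hIBl : I ⊆ Bl) :
    I.ncard ≤ d := by
  by_contra hc
  have h1 : I.ncard = d + 1 := by have := h.indep_le hI; omega
  exact ((h.hMB I).mp (h.indep_base_of_card hI h1)).2.2 Bl hBl hIBl

lemma rk_small {S : Set α} (hSE : S ⊆ E) (hc : S.ncard ≤ d) : rk M S = S.ncard :=
  indep_rk_eq (h.indep_small hSE hc)

lemma rk_ground : rk M E = d + 1 := by
  have := h.rank_M
  rwa [rank, h.hME] at this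

lemma exists_base_subset_spanning {S : Set α} (hSE : S ⊆ E) (hc : d + 1 ≤ S.ncard)
    (hnb : ∀ Bl ∈ Blocks, ¬ S ⊆ Bl) : ∃ B, M.IsBase B ∧ B ⊆ S := by
  obtain ⟨D, hDS, hD⟩ := Set.exists_subset_card_eq (show d ≤ S.ncard by omega)
  obtain ⟨Bl, ⟨hBl, hDBl⟩, huniq⟩ := h.hS D (hDS.trans hSE) hD
  obtain ⟨x, hxS, hxBl⟩ : ∃ x ∈ S, x ∉ Bl := by
    by_contra hc'
    push_neg at hc'
    exact hnb Bl hBl hc'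
  refine ⟨insert x D, ?_, Set.insert_subset hxS hDS⟩
  rw [h.hMB]
  refine ⟨Set.insert_subset (hSE hxS) (hDS.trans hSE), ?_, ?_⟩
  · rw [Set.ncard_insert_of_notMem (fun hxD => hxBl (hDBl hxD)) (Set.toFinite _), hD]
  · intro Bl' hBl' hsub
    have hDBl' : D ⊆ Bl' := (Set.subset_insert x D).trans hsub
    have : Bl' = Bl := huniq Bl' ⟨hBl', hDBl'⟩
    exact hxBl (this ▸ hsub (Set.mem_insert x D))

lemma rk_spanning {S : Set α} (hSE : S ⊆ E) (hc : d + 1 ≤ S.ncard)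
    (hnb : ∀ Bl ∈ Blocks, ¬ S ⊆ Bl) : rk M S = d + 1 := by
  obtain ⟨B, hB, hBS⟩ := h.exists_base_subset_spanning hSE hc hnb
  refine le_antisymm (rk_le fun I _ hI => h.indep_le hI) ?_
  have := le_rk hBS hB.indep
  rwa [h.base_card hB] at this

lemma rk_inblock {S Bl : Set α} (hBl : Bl ∈ Blocks) (hSBl : S ⊆ Bl) (hc : d ≤ S.ncard) :
    rk M S = d := by
  refine le_antisymm (rk_le fun I hIS hI => h.indep_in_block_le hBl hI (hIS.trans hSBl)) ?_
  obtain ⟨D, hDS, hD⟩ := Set.exists_subset_card_eq hc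
  have hDi : M.Indep D := h.indep_small ((hDS.trans hSBl).trans (h.hB Bl hBl).1) hD.le
  have := le_rk hDS hDi
  rwa [hD] at this

lemma basis_inblock {S Bl J : Set α} (hBl : Bl ∈ Blocks) (hSBl : S ⊆ Bl) (hc : d ≤ S.ncard)
    (hJ : M.IsBasis J S) : J.ncard = d := by
  have hle : J.ncard ≤ d := h.indep_in_block_le hBl hJ.indep (hJ.subset.trans hSBl)
  obtain ⟨D, hJD, hDS, hD⟩ := Set.exists_subsuperset_card_eq hJ.subset hle hc
  have hDi : M.Indep D := h.indep_small (hDS.trans (hSBl.trans (h.hB Bl hBl).1)) hD.le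
  have := hJ.eq_of_subset_indep hDi hJD hDS
  rw [this, hD]

lemma contract_inblock_base_iff {S Bl : Set α} (hBl : Bl ∈ Blocks) (hSBl : S ⊆ Bl)
    (hc : d ≤ S.ncard) {B : Set α} :
    (M ⧸ S).IsBase B ↔ ∃ x, (x ∈ E ∧ x ∉ Bl) ∧ B = {x} := by
  have hBlE := (h.hB Bl hBl).1
  have hSE : S ⊆ M.E := h.hME ▸ (hSBl.trans hBlE)
  rw [contract_base_iff hSE]
  constructor
  · rintro ⟨hBE, J, hJ, hBJ⟩
    have hJc := h.basis_inblock hBl hSBl hc hJ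
    have hBJc := h.base_card hBJ
    have hdisj : Disjoint B J := Set.disjoint_left.mpr
      (fun x hxB hxJ => (hBE hxB).2 (hJ.subset hxJ))
    have hBc : B.ncard = 1 := by
      have huc := Set.ncard_union_eq hdisj (Set.toFinite _) (Set.toFinite _)
      omega
    obtain ⟨x, rfl⟩ := Set.ncard_eq_one.mp hBc
    refine ⟨x, ⟨?_, ?_⟩, rfl⟩
    · exact ((h.hMB _).mp hBJ).1 (Or.inl rfl)
    · intro hxBl
      have hsub : {x} ∪ J ⊆ Bl := Set.union_subset (by simpa using hxBl)
        (hJ.subset.trans hSBl)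
      exact ((h.hMB _).mp hBJ).2.2 Bl hBl hsub
  · rintro ⟨x, ⟨hxE, hxBl⟩, rfl⟩
    obtain ⟨J, hJ⟩ := M.exists_isBasis S hSE
    have hJc := h.basis_inblock hBl hSBl hc hJ
    have hJBl : J ⊆ Bl := hJ.subset.trans hSBl
    refine ⟨?_, J, hJ, ?_⟩
    · rintro y (rfl : y = x)
      exact ⟨h.hME ▸ hxE, fun hxS => hxBl (hSBl hxS)⟩
    · rw [h.hMB]
      refine ⟨Set.union_subset (by simpa using hxE) (hJBl.trans hBlE), ?_, ?_⟩
      · have hxJ : x ∉ J := fun hx => hxBl (hJBl hx)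
        rw [Set.singleton_union, Set.ncard_insert_of_notMem hxJ (Set.toFinite _), hJc]
      · intro Bl' hBl' hsub
        obtain ⟨Bl₀, hBl₀, huniq⟩ := h.hS J (hJBl.trans hBlE) hJc
        have h1 : Bl' = Bl₀ := huniq Bl' ⟨hBl', Set.subset_union_right.trans hsub⟩
        have h2 : Bl = Bl₀ := huniq Bl ⟨hBl, hJBl⟩
        rw [h1, ← h2] at hsub
        exact hxBl (hsub (Or.inl rfl))

lemma contract_inblock_rank1 {S Bl : Set α} (hBl : Bl ∈ Blocks) (hSBl : S ⊆ Bl)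
    (hc : d ≤ S.ncard) : rank (M ⧸ S) = 1 := by
  obtain ⟨x, hxE, hxBl⟩ := h.block_ssub_ground hBl
  have hB : (M ⧸ S).IsBase {x} := (h.contract_inblock_base_iff hBl hSBl hc).mpr
    ⟨x, ⟨hxE, hxBl⟩, rfl⟩
  rw [rank_eq_of_base hB, Set.ncard_singleton]

lemma contract_inblock_loopSet {S Bl : Set α} (hBl : Bl ∈ Blocks) (hSBl : S ⊆ Bl)
    (hc : d ≤ S.ncard) : loopSet (M ⧸ S) = Bl \ S := by
  have hBlE := (h.hB Bl hBl).1
  ext y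
  simp only [loopSet, Set.mem_setOf_eq, contract_ground, Set.mem_diff, h.hME]
  constructor
  · rintro ⟨⟨hyE, hyS⟩, hni⟩
    refine ⟨?_, hyS⟩
    by_contra hyBl
    exact hni (Matroid.indep_iff.mpr ⟨{y},
      (h.contract_inblock_base_iff hBl hSBl hc).mpr ⟨y, ⟨hyE, hyBl⟩, rfl⟩, subset_rfl⟩)
  · rintro ⟨hyBl, hyS⟩
    refine ⟨⟨hBlE hyBl, hyS⟩, fun hi => ?_⟩
    obtain ⟨B, hB, hyB⟩ := Matroid.indep_iff.mp hi
    obtain ⟨x, ⟨-, hxBl⟩, rfl⟩ := (h.contract_inblock_base_iff hBl hSBl hc).mp hB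
    have : y = x := hyB rfl
    exact hxBl (this ▸ hyBl)

lemma contract_small {F : Set α} (hFE : F ⊆ E) (hFc : F.ncard < d) :
    SteinerHyp (d - F.ncard) (E \ F) ((fun Bl => Bl \ F) '' {Bl | Bl ∈ Blocks ∧ F ⊆ Bl})
      (M ⧸ F) := by
  have hFfin : F.Finite := Set.toFinite _
  have hFind : M.Indep F := h.indep_small hFE (by omega)
  have hFME : F ⊆ M.E := h.hME ▸ hFE
  constructor
  · omega
  · rw [Set.ncard_diff hFE (Set.toFinite _), h.hE]; omega
  · rintro Bl' ⟨Bl, ⟨hBl, hFBl⟩, rfl⟩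
    constructor
    · exact fun x hx => ⟨(h.hB Bl hBl).1 hx.1, hx.2⟩
    · rw [Set.ncard_diff hFBl (Set.toFinite _), (h.hB Bl hBl).2]; omega
  · intro D hDE hD
    have hdisj : Disjoint F D := Set.disjoint_right.mpr fun x hx => (hDE hx).2
    have hFD : F ∪ D ⊆ E := Set.union_subset hFE (fun x hx => (hDE hx).1)
    have hFDc : (F ∪ D).ncard = d := by
      rw [Set.ncard_union_eq hdisj (Set.toFinite _) (Set.toFinite _), hD]; omega
    obtain ⟨Bl, ⟨hBl, hFDBl⟩, huniq⟩ := h.hS (F ∪ D) hFD hFDc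
    refine ⟨Bl \ F, ⟨⟨Bl, ⟨hBl, Set.subset_union_left.trans hFDBl⟩, rfl⟩, ?_⟩, ?_⟩
    · exact fun x hx => ⟨hFDBl (Or.inr hx), (hDE hx).2⟩
    · rintro Bl₁' ⟨⟨Bl₁, ⟨hBl₁, hFBl₁⟩, rfl⟩, hDBl₁⟩
      have : Bl₁ = Bl := huniq Bl₁ ⟨hBl₁,
        Set.union_subset hFBl₁ (fun x hx => (hDBl₁ hx).1)⟩
      rw [this]
  · rw [contract_ground, h.hME]
  · intro B
    rw [contract_base_iff hFME]
    have hbasisF : ∀ I, M.IsBasis I F → I = F := fun I hI =>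
      hI.eq_of_subset_indep hFind hI.subset subset_rfl
    constructor
    · rintro ⟨hBE, I, hI, hBI⟩
      rw [hbasisF I hI] at hBI
      obtain ⟨hBFE, hBFc, hBFbl⟩ := (h.hMB _).mp hBI
      have hdisj : Disjoint B F := Set.disjoint_left.mpr fun x hxB hxF => (hBE hxB).2 hxF
      have hBE' : B ⊆ E \ F := h.hME ▸ hBE
      refine ⟨hBE', ?_, ?_⟩
      · have huc := Set.ncard_union_eq hdisj (Set.toFinite _) (Set.toFinite _)
        rw [hBFc] at huc
        omega
      · rintro Bl' ⟨Bl, ⟨hBl, hFBl⟩, rfl⟩ hsub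
        exact hBFbl Bl hBl (Set.union_subset (fun x hx => (hsub hx).1) hFBl)
    · rintro ⟨hBE, hBc, hBbl⟩
      refine ⟨h.hME ▸ hBE, F, hFind.isBasis_self, ?_⟩
      rw [h.hMB]
      have hdisj : Disjoint B F := Set.disjoint_left.mpr fun x hxB hxF => (hBE hxB).2 hxF
      refine ⟨Set.union_subset (fun x hx => (hBE hx).1) hFE, ?_, ?_⟩
      · rw [Set.ncard_union_eq hdisj (Set.toFinite _) (Set.toFinite _), hBc]; omega
      · intro Bl hBl hsub
        have hFBl : F ⊆ Bl := Set.subset_union_right.trans hsub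
        refine hBbl (Bl \ F) ⟨Bl, ⟨hBl, hFBl⟩, rfl⟩ ?_
        intro x hx
        exact ⟨hsub (Or.inl hx), (hBE hx).2⟩

end SteinerHyp


-- ===== block counting =====

open scoped Classical in
lemma SteinerHyp.block_count {d : ℕ} {E : Set α} {Blocks : Set (Set α)} {M : Matroid α}
    (h : SteinerHyp d E Blocks M) :
    ((E.toFinite.toFinset.powersetCard (d+3)).filter
      (fun s : Finset α => (↑s : Set α) ∈ Blocks)).card * ((d+3).choose d)
      = (19+d).choose d := by
  classical
  set EF := E.toFinite.toFinset with hEF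
  have hEFcoe : (EF : Set α) = E := Set.Finite.coe_toFinset _
  have hEFcard : EF.card = 19 + d := by
    rw [← Set.ncard_coe_finset EF, hEFcoe, h.hE]
  set BF := (EF.powersetCard (d+3)).filter (fun s : Finset α => (↑s : Set α) ∈ Blocks)
    with hBF
  have key : (∑ Bl ∈ BF, ∑ D ∈ EF.powersetCard d, (if D ⊆ Bl then (1:ℕ) else 0))
      = ∑ D ∈ EF.powersetCard d, ∑ Bl ∈ BF, (if D ⊆ Bl then (1:ℕ) else 0) :=
    Finset.sum_comm
  have hL : ∀ Bl ∈ BF, (∑ D ∈ EF.powersetCard d, (if D ⊆ Bl then (1:ℕ) else 0))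
      = (d+3).choose d := by
    intro Bl hBl
    rw [Finset.mem_filter, Finset.mem_powersetCard] at hBl
    obtain ⟨⟨hBlEF, hBlc⟩, hBlB⟩ := hBl
    rw [Finset.sum_ite, Finset.sum_const, Finset.sum_const_zero, add_zero, smul_eq_mul,
      mul_one]
    have : (EF.powersetCard d).filter (fun D => D ⊆ Bl) = Bl.powersetCard d := by
      ext D
      simp only [Finset.mem_filter, Finset.mem_powersetCard]
      exact ⟨fun ⟨⟨_, hc⟩, hsub⟩ => ⟨hsub, hc⟩, fun ⟨hsub, hc⟩ => ⟨⟨hsub.trans hBlEF, hc⟩, hsub⟩⟩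
    rw [this, Finset.card_powersetCard, hBlc]
  have hR : ∀ D ∈ EF.powersetCard d, (∑ Bl ∈ BF, (if D ⊆ Bl then (1:ℕ) else 0)) = 1 := by
    intro D hD
    rw [Finset.mem_powersetCard] at hD
    obtain ⟨hDEF, hDc⟩ := hD
    have hDE : (D : Set α) ⊆ E := by rw [← hEFcoe]; exact_mod_cast hDEF
    have hDnc : (D : Set α).ncard = d := by rw [Set.ncard_coe_finset, hDc]
    obtain ⟨Bl₀, ⟨hBl₀, hDBl₀⟩, huniq⟩ := h.hS (D : Set α) hDE hDnc
    have hBl₀fin : Bl₀.Finite := Set.toFinite _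
    set Blf := hBl₀fin.toFinset with hBlf
    have hBlfcoe : (Blf : Set α) = Bl₀ := Set.Finite.coe_toFinset _
    rw [Finset.sum_ite, Finset.sum_const, Finset.sum_const_zero, add_zero, smul_eq_mul,
      mul_one]
    have : BF.filter (fun Bl => D ⊆ Bl) = {Blf} := by
      ext Bl
      simp only [hBF, Finset.mem_filter, Finset.mem_powersetCard, Finset.mem_singleton]
      constructor
      · rintro ⟨⟨⟨hBlEF, hBlc⟩, hBlB⟩, hDBl⟩
        have : (Bl : Set α) = Bl₀ := huniq _ ⟨hBlB, by exact_mod_cast hDBl⟩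
        apply Finset.coe_injective
        rw [this, hBlfcoe]
      · rintro rfl
        have h1 : (Blf : Set α) ∈ Blocks := by rw [hBlfcoe]; exact hBl₀
        have h2 : Blf ⊆ EF := by
          intro x hx
          rw [Set.Finite.mem_toFinset] at hx
          rw [hEF, Set.Finite.mem_toFinset]
          exact (h.hB Bl₀ hBl₀).1 hx
        have h3 : Blf.card = d + 3 := by
          rw [← Set.ncard_coe_finset, hBlfcoe, (h.hB Bl₀ hBl₀).2]
        have h4 : D ⊆ Blf := by
          intro x hx
          rw [Set.Finite.mem_toFinset]
          exact hDBl₀ (by exact_mod_cast hx)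
        exact ⟨⟨⟨h2, h3⟩, h1⟩, h4⟩
    rw [this, Finset.card_singleton]
  rw [Finset.sum_congr rfl hL, Finset.sum_congr rfl hR] at key
  simp only [Finset.sum_const, smul_eq_mul, mul_one] at key
  rw [Finset.card_powersetCard, hEFcard] at key
  exact key


-- ===== the Z-polynomial sum for Steiner matroids =====

open scoped Classical in
lemma SteinerHyp.term_zero {d : ℕ} {E : Set α} {Blocks : Set (Set α)} {M : Matroid α}
    {P Z : Matroid α → Polynomial ℤ} (hPZ : PZaxioms P Z)
    (h : SteinerHyp d E Blocks M) {S : Set α} (hSE : S ⊆ E) (hSc : d ≤ S.ncard)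
    (hSnb : S ∉ Blocks) (hSnE : S.ncard ≠ 19 + d) : P (M ⧸ S) = 0 := by
  by_cases hbl : ∃ Bl ∈ Blocks, S ⊆ Bl
  · obtain ⟨Bl, hBl, hSBl⟩ := hbl
    have hne : S ≠ Bl := fun hc => hSnb (hc ▸ hBl)
    obtain ⟨y, hyBl, hyS⟩ := Set.exists_of_ssubset (ssubset_of_subset_of_ne hSBl hne)
    have hr1 := h.contract_inblock_rank1 hBl hSBl hSc
    have hls := h.contract_inblock_loopSet hBl hSBl hSc
    have hm : (loopSet (M ⧸ S)).ncard ≠ 0 := by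
      rw [hls]
      exact Set.ncard_ne_zero_of_mem ⟨hyBl, hyS⟩ (Set.toFinite _)
    have := P_rank1_loops hPZ ((loopSet (M ⧸ S)).ncard) (M ⧸ S) hr1 rfl
    rwa [if_neg hm] at this
  · push_neg at hbl
    have hid : S.ncard ≠ d := by
      intro hc
      obtain ⟨Bl, ⟨hBl, hSBl⟩, -⟩ := h.hS S hSE hc
      exact hbl Bl hBl hSBl
    obtain ⟨B, hB, hBS⟩ := h.exists_base_subset_spanning hSE (by omega) hbl
    have hr0 : rank (M ⧸ S) = 0 := contract_spanning_rank0 (h.hME ▸ hSE) hB hBS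
    have hgne : (M ⧸ S).E ≠ ∅ := by
      rw [contract_ground, h.hME]
      intro hc
      have : E = S := Set.Subset.antisymm (Set.diff_eq_empty.mp hc) hSE
      rw [← this] at hSnE
      exact hSnE h.hE
    exact P_rank0 hPZ hgne hr0

lemma SteinerHyp.P_block {d : ℕ} {E : Set α} {Blocks : Set (Set α)} {M : Matroid α}
    {P Z : Matroid α → Polynomial ℤ} (hPZ : PZaxioms P Z)
    (h : SteinerHyp d E Blocks M) {Bl : Set α} (hBl : Bl ∈ Blocks) : P (M ⧸ Bl) = 1 := by
  have hc : d ≤ Bl.ncard := by rw [(h.hB Bl hBl).2]; omega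
  have hr1 := h.contract_inblock_rank1 hBl subset_rfl hc
  have hls := h.contract_inblock_loopSet hBl subset_rfl hc
  have hm : (loopSet (M ⧸ Bl)).ncard = 0 := by rw [hls]; simp
  have := P_rank1_loops hPZ ((loopSet (M ⧸ Bl)).ncard) (M ⧸ Bl) hr1 rfl
  rwa [if_pos hm] at this

open scoped Classical in
lemma SteinerHyp.Zsum {d : ℕ} {E : Set α} {Blocks : Set (Set α)} {M : Matroid α}
    {P Z : Matroid α → Polynomial ℤ} (hPZ : PZaxioms P Z)
    (h : SteinerHyp d E Blocks M) (q : ℕ → Polynomial ℤ)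
    (hq : ∀ S : Set α, S ⊆ E → 1 ≤ S.ncard → S.ncard < d → P (M ⧸ S) = q S.ncard) :
    Z M = P M + (∑ i ∈ Finset.Ico 1 d, ((19+d).choose i) • ((X : Polynomial ℤ)^i * q i))
      + (((E.toFinite.toFinset.powersetCard (d+3)).filter
          (fun s : Finset α => (↑s : Set α) ∈ Blocks)).card) • (X : Polynomial ℤ)^d
      + X^(d+1) := by
  classical
  set EF := E.toFinite.toFinset with hEF
  have hEFcoe : (EF : Set α) = E := Set.Finite.coe_toFinset _
  have hEFcard : EF.card = 19 + d := by
    rw [← Set.ncard_coe_finset EF, hEFcoe, h.hE]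
  have hZ := hPZ.2.2.2 M
  have hfs : M.E.toFinite.toFinset = EF := by
    ext x
    rw [Set.Finite.mem_toFinset, hEF, Set.Finite.mem_toFinset, h.hME]
  rw [hfs, Finset.sum_powerset, hEFcard] at hZ
  -- facts about subsets
  have hcoe : ∀ S : Finset α, S ∈ EF.powerset → (↑S : Set α) ⊆ E := by
    intro S hSp
    rw [← hEFcoe]
    exact_mod_cast Finset.mem_powerset.mp hSp
  -- the term at each cardinality
  have hA0 : (∑ S ∈ Finset.powersetCard 0 EF, X ^ rk M (S : Set α) * P (M ⧸ (S : Set α)))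
      = P M := by
    rw [Finset.powersetCard_zero, Finset.sum_singleton, Finset.coe_empty, rk_empty,
      contract_empty, pow_zero, one_mul]
  have hAsmall : ∀ i ∈ Finset.Ico 1 d,
      (∑ S ∈ Finset.powersetCard i EF, X ^ rk M (S : Set α) * P (M ⧸ (S : Set α)))
      = ((19+d).choose i) • ((X : Polynomial ℤ)^i * q i) := by
    intro i hi
    rw [Finset.mem_Ico] at hi
    have hterm : ∀ S ∈ Finset.powersetCard i EF,
        X ^ rk M (S : Set α) * P (M ⧸ (S : Set α)) = (X : Polynomial ℤ)^i * q i := by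
      intro S hSmem
      rw [Finset.mem_powersetCard] at hSmem
      have hSE : (S : Set α) ⊆ E := by
        rw [← hEFcoe]; exact_mod_cast hSmem.1
      have hSc : (S : Set α).ncard = i := by rw [Set.ncard_coe_finset, hSmem.2]
      rw [h.rk_small hSE (by omega), hSc, hq _ hSE (by omega) (by omega), hSc]
    rw [Finset.sum_congr rfl hterm, Finset.sum_const, Finset.card_powersetCard, hEFcard]
  have hAzero : ∀ i, d ≤ i → i ≠ d + 3 → i ≠ 19 + d →
      (∑ S ∈ Finset.powersetCard i EF, X ^ rk M (S : Set α) * P (M ⧸ (S : Set α))) = 0 := by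
    intro i hdi h3 hn
    refine Finset.sum_eq_zero fun S hSmem => ?_
    rw [Finset.mem_powersetCard] at hSmem
    have hSE : (S : Set α) ⊆ E := by rw [← hEFcoe]; exact_mod_cast hSmem.1
    have hSc : (S : Set α).ncard = i := by rw [Set.ncard_coe_finset, hSmem.2]
    have hSnb : (S : Set α) ∉ Blocks := by
      intro hc
      rw [(h.hB _ hc).2] at hSc
      omega
    rw [h.term_zero hPZ hSE (by omega) hSnb (by omega), mul_zero]
  have hAblock : (∑ S ∈ Finset.powersetCard (d+3) EF,
      X ^ rk M (S : Set α) * P (M ⧸ (S : Set α)))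
      = (((EF.powersetCard (d+3)).filter
          (fun s : Finset α => (↑s : Set α) ∈ Blocks)).card) • (X : Polynomial ℤ)^d := by
    have hterm : ∀ S ∈ Finset.powersetCard (d+3) EF,
        X ^ rk M (S : Set α) * P (M ⧸ (S : Set α)) =
          (if (↑S : Set α) ∈ Blocks then (X : Polynomial ℤ)^d else 0) := by
      intro S hSmem
      rw [Finset.mem_powersetCard] at hSmem
      have hSE : (S : Set α) ⊆ E := by rw [← hEFcoe]; exact_mod_cast hSmem.1
      have hSc : (S : Set α).ncard = d + 3 := by rw [Set.ncard_coe_finset, hSmem.2]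
      by_cases hbl : (↑S : Set α) ∈ Blocks
      · rw [if_pos hbl, h.rk_inblock hbl subset_rfl (by omega), h.P_block hPZ hbl, mul_one]
      · rw [if_neg hbl, h.term_zero hPZ hSE (by omega) hbl (by omega), mul_zero]
    rw [Finset.sum_congr rfl hterm, Finset.sum_ite, Finset.sum_const, Finset.sum_const_zero,
      add_zero]
  have hAtop : (∑ S ∈ Finset.powersetCard (19+d) EF,
      X ^ rk M (S : Set α) * P (M ⧸ (S : Set α))) = (X : Polynomial ℤ)^(d+1) := by
    rw [← hEFcard, Finset.powersetCard_self, Finset.sum_singleton, hEFcoe, h.rk_ground]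
    have : P (M ⧸ E) = 1 := P_empty hPZ (by rw [contract_ground, h.hME]; simp)
    rw [this, mul_one]
  -- assemble
  rw [Finset.range_eq_Ico,
    ← Finset.sum_Ico_consecutive _ (Nat.zero_le 1) (by omega : 1 ≤ 19 + d + 1),
    ← Finset.sum_Ico_consecutive _ (by exact h.hd : 1 ≤ d) (by omega : d ≤ 19 + d + 1)] at hZ
  have e1 : (∑ i ∈ Finset.Ico 0 1, ∑ S ∈ Finset.powersetCard i EF,
      X ^ rk M (S : Set α) * P (M ⧸ (S : Set α))) = P M := by
    rw [show Finset.Ico 0 1 = {0} from rfl, Finset.sum_singleton, hA0]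
  have e2 : (∑ i ∈ Finset.Ico 1 d, ∑ S ∈ Finset.powersetCard i EF,
      X ^ rk M (S : Set α) * P (M ⧸ (S : Set α)))
      = ∑ i ∈ Finset.Ico 1 d, ((19+d).choose i) • ((X : Polynomial ℤ)^i * q i) :=
    Finset.sum_congr rfl hAsmall
  have e3 : (∑ i ∈ Finset.Ico d (19 + d + 1), ∑ S ∈ Finset.powersetCard i EF,
      X ^ rk M (S : Set α) * P (M ⧸ (S : Set α)))
      = (((EF.powersetCard (d+3)).filter
          (fun s : Finset α => (↑s : Set α) ∈ Blocks)).card) • (X : Polynomial ℤ)^d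
        + (X : Polynomial ℤ)^(d+1) := by
    have hterm : ∀ i ∈ Finset.Ico d (19 + d + 1),
        (∑ S ∈ Finset.powersetCard i EF, X ^ rk M (S : Set α) * P (M ⧸ (S : Set α)))
        = (if i = d + 3 then (((EF.powersetCard (d+3)).filter
            (fun s : Finset α => (↑s : Set α) ∈ Blocks)).card) • (X : Polynomial ℤ)^d else 0)
          + (if i = 19 + d then (X : Polynomial ℤ)^(d+1) else 0) := by
      intro i hi
      rw [Finset.mem_Ico] at hi
      by_cases h3 : i = d + 3
      · subst h3
        rw [if_pos rfl, if_neg (by omega), add_zero, hAblock]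
      · by_cases hn : i = 19 + d
        · subst hn
          rw [if_neg h3, if_pos rfl, zero_add, hAtop]
        · rw [if_neg h3, if_neg hn, add_zero, hAzero i hi.1 h3 hn]
    rw [Finset.sum_congr rfl hterm, Finset.sum_add_distrib,
      Finset.sum_ite_eq' _ (d+3), Finset.sum_ite_eq' _ (19+d),
      if_pos (by rw [Finset.mem_Ico]; omega), if_pos (by rw [Finset.mem_Ico]; omega)]
  rw [e1, e2, e3] at hZ
  rw [hZ]
  ring


-- ===== the master computation =====

lemma P_from_Z {P Z : Matroid α → Polynomial ℤ} (hPZ : PZaxioms P Z) {M : Matroid α}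
    (hEne : M.E ≠ ∅) {r : ℕ} (hr : rank M = r) {R : Polynomial ℤ} (hZR : Z M = P M + R)
    {j : ℕ} (hj : 2*j < r) : (P M).coeff j = R.coeff (r-j) - R.coeff j := by
  have hvan : (P M).coeff (r - j) = 0 := by
    apply P_coeff_zero_of_2le hPZ hEne
    rw [hr]; omega
  have hpal := (hPZ.2.2.1 M).2 j (by rw [hr]; omega)
  rw [hr, hZR] at hpal
  simp only [Polynomial.coeff_add] at hpal
  rw [hvan, zero_add] at hpal
  omega

noncomputable def sp : ℕ → Polynomial ℤ
  | 1 => 1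
  | 2 => 1
  | 3 => 1 + Polynomial.C 55 * Polynomial.X
  | 4 => 1 + Polynomial.C 230 * Polynomial.X + Polynomial.C 253 * Polynomial.X ^ 2
  | 5 => 1 + Polynomial.C 735 * Polynomial.X + Polynomial.C 4830 * Polynomial.X ^ 2
  | _ => 0

open scoped Classical in
lemma steiner_master {P Z : Matroid α → Polynomial ℤ} (hPZ : PZaxioms P Z) :
    ∀ d, d ≤ 5 → ∀ (E : Set α) (Blocks : Set (Set α)) (M : Matroid α),
      SteinerHyp d E Blocks M → P M = sp d := by
  intro d
  induction d using Nat.strong_induction_on with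
  | _ d IH =>
  intro hd5 E Blocks M h
  have hd1 : 1 ≤ d := h.hd
  have hq : ∀ S : Set α, S ⊆ E → 1 ≤ S.ncard → S.ncard < d →
      P (M ⧸ S) = sp (d - S.ncard) := by
    intro S hSE h1 h2
    exact IH (d - S.ncard) (by omega) (by omega) _ _ _ (h.contract_small hSE h2)
  have hZ := h.Zsum hPZ (fun i => sp (d - i)) hq
  have hbc := h.block_count
  have hrank := h.rank_M
  have hEne : M.E ≠ ∅ := by
    rw [h.hME]
    intro hc
    have h2 := h.hE
    rw [hc, Set.ncard_empty] at h2
    omega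
  clear hq IH
  generalize ((E.toFinite.toFinset.powersetCard (d+3)).filter
      (fun s : Finset α => (↑s : Set α) ∈ Blocks)).card = b at hZ hbc
  interval_cases d
  · -- d = 1
    have hb : b = 5 := by
      have e1 : ((1:ℕ)+3).choose 1 = 4 := by decide
      have e2 : ((19:ℕ)+1).choose 1 = 20 := by decide
      rw [e1, e2] at hbc; omega
    have hZR : Z M = P M + (C 5 * X + X^2) := by
      rw [hZ, hb, Finset.Ico_self, Finset.sum_empty]
      simp only [nsmul_eq_mul]
      push_cast
      ring_nf
      try simp [Polynomial.C_eq_intCast]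
      try ring
    have hvan : ∀ n, 1 ≤ n → (P M).coeff n = 0 := fun n hn =>
      P_coeff_zero_of_2le hPZ hEne (by rw [hrank]; omega)
    have hc0 : (P M).coeff 0 = 1 := by
      rw [P_from_Z hPZ hEne hrank hZR (j := 0) (by omega)]
      simp [Polynomial.coeff_add, Polynomial.coeff_C_mul, Polynomial.coeff_X_pow,
        Polynomial.coeff_X, Polynomial.coeff_one]
      try norm_num
    show P M = sp 1
    rw [show sp 1 = 1 from rfl]
    ext n
    rcases n with _ | n
    · simpa using hc0
    · rw [hvan (n+1) (by omega)]
      simp [Polynomial.coeff_one]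
  · -- d = 2
    have hb : b = 21 := by
      have e1 : ((2:ℕ)+3).choose 2 = 10 := by decide
      have e2 : ((19:ℕ)+2).choose 2 = 210 := by decide
      rw [e1, e2] at hbc; omega
    have hZR : Z M = P M + (C 21 * X + C 21 * X^2 + X^3) := by
      rw [hZ, hb, show Finset.Ico 1 2 = ({1} : Finset ℕ) by decide, Finset.sum_singleton]
      simp only [nsmul_eq_mul]
      have e1 : ((19:ℕ)+2).choose 1 = 21 := by decide
      rw [e1, show sp (2-1) = 1 from rfl]
      push_cast
      ring_nf
      try simp [Polynomial.C_eq_intCast]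
      try ring
    have hvan : ∀ n, 2 ≤ n → (P M).coeff n = 0 := fun n hn =>
      P_coeff_zero_of_2le hPZ hEne (by rw [hrank]; omega)
    have hc0 : (P M).coeff 0 = 1 := by
      rw [P_from_Z hPZ hEne hrank hZR (j := 0) (by omega)]
      simp [Polynomial.coeff_add, Polynomial.coeff_C_mul, Polynomial.coeff_X_pow,
        Polynomial.coeff_X, Polynomial.coeff_one]
      try norm_num
    have hc1 : (P M).coeff 1 = 0 := by
      rw [P_from_Z hPZ hEne hrank hZR (j := 1) (by omega)]
      simp [Polynomial.coeff_add, Polynomial.coeff_C_mul, Polynomial.coeff_X_pow,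
        Polynomial.coeff_X, Polynomial.coeff_one]
      try norm_num
    show P M = sp 2
    rw [show sp 2 = 1 from rfl]
    ext n
    rcases n with _ | _ | n
    · simpa using hc0
    · rw [hc1]; simp [Polynomial.coeff_one]
    · rw [hvan (n+2) (by omega)]; simp [Polynomial.coeff_one]
  · -- d = 3
    have hb : b = 77 := by
      have e1 : ((3:ℕ)+3).choose 3 = 20 := by decide
      have e2 : ((19:ℕ)+3).choose 3 = 1540 := by decide
      rw [e1, e2] at hbc; omega
    have hZR : Z M = P M + (C 22 * X + C 231 * X^2 + C 77 * X^3 + X^4) := by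
      rw [hZ, hb, show Finset.Ico 1 3 = ({1, 2} : Finset ℕ) by decide,
        Finset.sum_insert (by decide), Finset.sum_singleton]
      simp only [nsmul_eq_mul]
      have e1 : ((19:ℕ)+3).choose 1 = 22 := by decide
      have e2 : ((19:ℕ)+3).choose 2 = 231 := by decide
      rw [e1, e2, show sp (3-1) = 1 from rfl, show sp (3-2) = 1 from rfl]
      push_cast
      ring_nf
      try simp [Polynomial.C_eq_intCast]
      try ring
    have hvan : ∀ n, 2 ≤ n → (P M).coeff n = 0 := fun n hn =>
      P_coeff_zero_of_2le hPZ hEne (by rw [hrank]; omega)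
    have hc0 : (P M).coeff 0 = 1 := by
      rw [P_from_Z hPZ hEne hrank hZR (j := 0) (by omega)]
      simp [Polynomial.coeff_add, Polynomial.coeff_C_mul, Polynomial.coeff_X_pow,
        Polynomial.coeff_X, Polynomial.coeff_one]
      try norm_num
    have hc1 : (P M).coeff 1 = 55 := by
      rw [P_from_Z hPZ hEne hrank hZR (j := 1) (by omega)]
      simp [Polynomial.coeff_add, Polynomial.coeff_C_mul, Polynomial.coeff_X_pow,
        Polynomial.coeff_X, Polynomial.coeff_one]
      try norm_num
    show P M = sp 3
    rw [show sp 3 = 1 + Polynomial.C 55 * X from rfl]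
    ext n
    rcases n with _ | _ | n
    · simpa using hc0
    · rw [hc1]
      simp [Polynomial.coeff_one, Polynomial.coeff_C_mul, Polynomial.coeff_X]
    · rw [hvan (n+2) (by omega)]
      simp [Polynomial.coeff_one, Polynomial.coeff_C_mul, Polynomial.coeff_X]
  · -- d = 4
    have hb : b = 253 := by
      have e1 : ((4:ℕ)+3).choose 4 = 35 := by decide
      have e2 : ((19:ℕ)+4).choose 4 = 8855 := by decide
      rw [e1, e2] at hbc; omega
    have hZR : Z M = P M +
        (C 23 * X + C 1518 * X^2 + C 1771 * X^3 + C 253 * X^4 + X^5) := by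
      rw [hZ, hb, show Finset.Ico 1 4 = ({1, 2, 3} : Finset ℕ) by decide,
        Finset.sum_insert (by decide), Finset.sum_insert (by decide), Finset.sum_singleton]
      simp only [nsmul_eq_mul]
      have e1 : ((19:ℕ)+4).choose 1 = 23 := by decide
      have e2 : ((19:ℕ)+4).choose 2 = 253 := by decide
      have e3 : ((19:ℕ)+4).choose 3 = 1771 := by decide
      rw [e1, e2, e3, show sp (4-1) = 1 + Polynomial.C 55 * X from rfl,
        show sp (4-2) = 1 from rfl, show sp (4-3) = 1 from rfl]
      push_cast
      ring_nf
      try simp [Polynomial.C_eq_intCast]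
      try ring
    have hvan : ∀ n, 3 ≤ n → (P M).coeff n = 0 := fun n hn =>
      P_coeff_zero_of_2le hPZ hEne (by rw [hrank]; omega)
    have hc0 : (P M).coeff 0 = 1 := by
      rw [P_from_Z hPZ hEne hrank hZR (j := 0) (by omega)]
      simp [Polynomial.coeff_add, Polynomial.coeff_C_mul, Polynomial.coeff_X_pow,
        Polynomial.coeff_X, Polynomial.coeff_one]
      try norm_num
    have hc1 : (P M).coeff 1 = 230 := by
      rw [P_from_Z hPZ hEne hrank hZR (j := 1) (by omega)]
      simp [Polynomial.coeff_add, Polynomial.coeff_C_mul, Polynomial.coeff_X_pow,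
        Polynomial.coeff_X, Polynomial.coeff_one]
      try norm_num
    have hc2 : (P M).coeff 2 = 253 := by
      rw [P_from_Z hPZ hEne hrank hZR (j := 2) (by omega)]
      simp [Polynomial.coeff_add, Polynomial.coeff_C_mul, Polynomial.coeff_X_pow,
        Polynomial.coeff_X, Polynomial.coeff_one]
      try norm_num
    show P M = sp 4
    rw [show sp 4 = 1 + Polynomial.C 230 * X + Polynomial.C 253 * X ^ 2 from rfl]
    ext n
    rcases n with _ | _ | _ | n
    · simpa using hc0
    · rw [hc1]
      simp [Polynomial.coeff_one, Polynomial.coeff_C_mul, Polynomial.coeff_X,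
        Polynomial.coeff_X_pow]
    · rw [hc2]
      simp [Polynomial.coeff_one, Polynomial.coeff_C_mul, Polynomial.coeff_X,
        Polynomial.coeff_X_pow]
    · rw [hvan (n+3) (by omega)]
      simp [Polynomial.coeff_one, Polynomial.coeff_C_mul, Polynomial.coeff_X,
        Polynomial.coeff_X_pow]
  · -- d = 5
    have hb : b = 759 := by
      have e1 : ((5:ℕ)+3).choose 5 = 56 := by decide
      have e2 : ((19:ℕ)+5).choose 5 = 42504 := by decide
      rw [e1, e2] at hbc; omega
    have hZR : Z M = P M +
        (C 24 * X + C 5796 * X^2 + C 23276 * X^3 + C 10626 * X^4 + C 759 * X^5 + X^6) := by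
      rw [hZ, hb, show Finset.Ico 1 5 = ({1, 2, 3, 4} : Finset ℕ) by decide,
        Finset.sum_insert (by decide), Finset.sum_insert (by decide),
        Finset.sum_insert (by decide), Finset.sum_singleton]
      simp only [nsmul_eq_mul]
      have e1 : ((19:ℕ)+5).choose 1 = 24 := by decide
      have e2 : ((19:ℕ)+5).choose 2 = 276 := by decide
      have e3 : ((19:ℕ)+5).choose 3 = 2024 := by decide
      have e4 : ((19:ℕ)+5).choose 4 = 10626 := by decide
      rw [e1, e2, e3, e4,
        show sp (5-1) = 1 + Polynomial.C 230 * X + Polynomial.C 253 * X ^ 2 from rfl,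
        show sp (5-2) = 1 + Polynomial.C 55 * X from rfl,
        show sp (5-3) = 1 from rfl, show sp (5-4) = 1 from rfl]
      push_cast
      ring_nf
      try simp [Polynomial.C_eq_intCast]
      try ring
    have hvan : ∀ n, 3 ≤ n → (P M).coeff n = 0 := fun n hn =>
      P_coeff_zero_of_2le hPZ hEne (by rw [hrank]; omega)
    have hc0 : (P M).coeff 0 = 1 := by
      rw [P_from_Z hPZ hEne hrank hZR (j := 0) (by omega)]
      simp [Polynomial.coeff_add, Polynomial.coeff_C_mul, Polynomial.coeff_X_pow,
        Polynomial.coeff_X, Polynomial.coeff_one]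
      try norm_num
    have hc1 : (P M).coeff 1 = 735 := by
      rw [P_from_Z hPZ hEne hrank hZR (j := 1) (by omega)]
      simp [Polynomial.coeff_add, Polynomial.coeff_C_mul, Polynomial.coeff_X_pow,
        Polynomial.coeff_X, Polynomial.coeff_one]
      try norm_num
    have hc2 : (P M).coeff 2 = 4830 := by
      rw [P_from_Z hPZ hEne hrank hZR (j := 2) (by omega)]
      simp [Polynomial.coeff_add, Polynomial.coeff_C_mul, Polynomial.coeff_X_pow,
        Polynomial.coeff_X, Polynomial.coeff_one]
      try norm_num
    show P M = sp 5
    rw [show sp 5 = 1 + Polynomial.C 735 * X + Polynomial.C 4830 * X ^ 2 from rfl]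
    ext n
    rcases n with _ | _ | _ | n
    · simpa using hc0
    · rw [hc1]
      simp [Polynomial.coeff_one, Polynomial.coeff_C_mul, Polynomial.coeff_X,
        Polynomial.coeff_X_pow]
    · rw [hc2]
      simp [Polynomial.coeff_one, Polynomial.coeff_C_mul, Polynomial.coeff_X,
        Polynomial.coeff_X_pow]
    · rw [hvan (n+3) (by omega)]
      simp [Polynomial.coeff_one, Polynomial.coeff_C_mul, Polynomial.coeff_X,
        Polynomial.coeff_X_pow]


/-- Let `(E, ℋ)` be a Steiner system of type `(5,8,24)`: `|E| = 24`,
every block `Bl ∈ ℋ` is a `8`-element subset of `E`, and every `5`-element subset of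
`E` is contained in exactly one block.  Let `M` be its associated matroid of rank `6`,
whose bases are the `6`-element subsets of `E` contained in no block.  Then
`P_M(t) = 1 + 735t + 4830t²`. -/
theorem steiner_5_8_24_KL_polynomial {β : Type} [Fintype β]
    (P Z : Matroid β → Polynomial ℤ) (hPZ : PZaxioms P Z)
    (E : Set β) (Blocks : Set (Set β))
    (hEcard : E.ncard = 24)
    (hBlocks : ∀ Bl ∈ Blocks, Bl ⊆ E ∧ Bl.ncard = 8)
    (hSteiner : ∀ D ⊆ E, D.ncard = 5 → ∃! Bl, Bl ∈ Blocks ∧ D ⊆ Bl)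
    (M : Matroid β) (hME : M.E = E)
    (hMB : ∀ B : Set β, M.IsBase B ↔ B ⊆ E ∧ B.ncard = 6 ∧ ∀ Bl ∈ Blocks, ¬B ⊆ Bl) :
    P M = 1 + C 735 * X + C 4830 * X ^ 2 := by
  have hS5 : SteinerHyp 5 E Blocks M := by
    constructor
    · omega
    · rw [hEcard]
    · intro Bl hBl
      exact ⟨(hBlocks Bl hBl).1, (hBlocks Bl hBl).2⟩
    · exact hSteiner
    · exact hME
    · exact hMB
  have := steiner_master hPZ 5 (by omega) E Blocks M hS5
  rw [this]
  rfl

end KLPaper
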